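/- For the Lur'e-type discrete-time system x_{k+1} = A x_k + B u_k, y_k = C x_k, u_k = φ(y_k), where φ is L-Lipschitz with φ(0)=0, if there exists a symmetric positive definite matrix P and λ ∈ (0,1) such that (A + BΔC)^T P (A + BΔC) ⪯ λ² P for every matrix Δ with ‖Δ‖ ≤ L, then ‖x_k‖_P ≤ λ^k ‖x_0‖_P for all k, i.e., the closed loop converges linearly to the origin. -/

import Mathlib

open Matrix

/-- Lur'e-type discrete-time system `x⁺ = Ax + Bφ(Cx)` with `φ` `L`-Lipschitz and
`φ(0) = 0`: if there are `P ≻ 0` symmetric and `λ ∈ (0,1)` with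
`(A + BΔC)ᵀ P (A + BΔC) ⪯ λ² P` for every `Δ` of (Euclidean) operator norm `≤ L`,
then `‖x_k‖_P ≤ λ^k ‖x_0‖_P` for all `k`. -/
theorem lure_linear_convergence
    {n m p : ℕ}
    (A : Matrix (Fin n) (Fin n) ℝ) (B : Matrix (Fin n) (Fin m) ℝ)
    (C : Matrix (Fin p) (Fin n) ℝ)
    (φ : (Fin p → ℝ) → (Fin m → ℝ)) (L : ℝ) (hL : 0 ≤ L)
    (hφ0 : φ 0 = 0)
    -- φ is L-Lipschitz w.r.t. the Euclidean norm:
    (hφ : ∀ y y' : Fin p → ℝ,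
      (φ y - φ y') ⬝ᵥ (φ y - φ y') ≤ L ^ 2 * ((y - y') ⬝ᵥ (y - y')))
    (P : Matrix (Fin n) (Fin n) ℝ) (hP : P.PosDef)
    (lam : ℝ) (hlam0 : 0 < lam) (hlam1 : lam < 1)
    -- the quadratic Lyapunov certificate, robust over all ‖Δ‖ ≤ L:
    (hLMI : ∀ Δ : Matrix (Fin m) (Fin p) ℝ,
      (∀ y : Fin p → ℝ, (Δ *ᵥ y) ⬝ᵥ (Δ *ᵥ y) ≤ L ^ 2 * (y ⬝ᵥ y)) →
      (lam ^ 2 • P - (A + B * Δ * C)ᵀ * P * (A + B * Δ * C)).PosSemidef)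
    (x : ℕ → (Fin n → ℝ))
    (hx : ∀ k, x (k + 1) = A *ᵥ x k + B *ᵥ φ (C *ᵥ x k)) :
    ∀ k, Real.sqrt (x k ⬝ᵥ (P *ᵥ x k)) ≤ lam ^ k * Real.sqrt (x 0 ⬝ᵥ (P *ᵥ x 0)) := by
  have dp_nonneg : ∀ {q : ℕ} (v : Fin q → ℝ), (0:ℝ) ≤ v ⬝ᵥ v := fun v =>
    Finset.sum_nonneg fun i _ => mul_self_nonneg _
  -- key one-step decrease of the quadratic Lyapunov function
  have key : ∀ z : Fin n → ℝ,
      (A *ᵥ z + B *ᵥ φ (C *ᵥ z)) ⬝ᵥ (P *ᵥ (A *ᵥ z + B *ᵥ φ (C *ᵥ z)))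
        ≤ lam ^ 2 * (z ⬝ᵥ (P *ᵥ z)) := by
    intro z
    set y := C *ᵥ z with hy
    obtain ⟨Δ, hΔbound, hΔy⟩ :
        ∃ Δ : Matrix (Fin m) (Fin p) ℝ,
          (∀ v : Fin p → ℝ, (Δ *ᵥ v) ⬝ᵥ (Δ *ᵥ v) ≤ L ^ 2 * (v ⬝ᵥ v)) ∧ Δ *ᵥ y = φ y := by
      by_cases hd : y ⬝ᵥ y = 0
      · have hy0 : y = 0 := dotProduct_self_eq_zero.mp hd
        refine ⟨0, fun v => ?_, ?_⟩
        · simp only [Matrix.zero_mulVec, dotProduct_zero, zero_dotProduct]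
          exact mul_nonneg (by positivity) (dp_nonneg v)
        · simp [hy0, hφ0]
      · have hdpos : 0 < y ⬝ᵥ y := lt_of_le_of_ne (dp_nonneg y) (Ne.symm hd)
        set d : ℝ := y ⬝ᵥ y with hdd
        refine ⟨Matrix.of fun i j => φ y i * (y j / d), fun v => ?_, ?_⟩
        · have hmv : ∀ v : Fin p → ℝ,
              (Matrix.of fun i j => φ y i * (y j / d)) *ᵥ v = ((y ⬝ᵥ v) / d) • φ y := by
            intro v
            funext i
            simp only [mulVec, dotProduct, Matrix.of_apply, Pi.smul_apply, smul_eq_mul]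
            rw [Finset.sum_div, Finset.sum_mul]
            exact Finset.sum_congr rfl fun j _ => by ring
          rw [hmv]
          have h1 : (φ y) ⬝ᵥ (φ y) ≤ L ^ 2 * d := by
            have := hφ y 0
            simpa [hφ0] using this
          have h2 : (y ⬝ᵥ v) ^ 2 ≤ d * (v ⬝ᵥ v) := by
            have := Finset.sum_mul_sq_le_sq_mul_sq Finset.univ y v
            rw [hdd]; simpa [dotProduct, sq] using this
          have hexp : (((y ⬝ᵥ v) / d) • φ y) ⬝ᵥ (((y ⬝ᵥ v) / d) • φ y)
              = ((y ⬝ᵥ v) / d) ^ 2 * ((φ y) ⬝ᵥ (φ y)) := by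
            simp [dotProduct, Finset.mul_sum]
            congr 1; funext i; ring
          rw [hexp]
          have hφnn := dp_nonneg (φ y)
          have hvnn := dp_nonneg v
          rw [div_pow]
          calc (y ⬝ᵥ v) ^ 2 / d ^ 2 * ((φ y) ⬝ᵥ (φ y))
              ≤ (y ⬝ᵥ v) ^ 2 / d ^ 2 * (L ^ 2 * d) := by
                apply mul_le_mul_of_nonneg_left h1 (by positivity)
            _ = L ^ 2 * ((y ⬝ᵥ v) ^ 2 / d) := by field_simp
            _ ≤ L ^ 2 * (v ⬝ᵥ v) := by
                apply mul_le_mul_of_nonneg_left _ (by positivity)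
                rw [div_le_iff₀ hdpos]
                linarith [h2]
        · funext i
          simp only [mulVec, dotProduct, Matrix.of_apply]
          have hsum : ∑ j, φ y i * (y j / d) * y j = φ y i * (∑ j, y j * y j) / d := by
            rw [Finset.mul_sum, Finset.sum_div]
            exact Finset.sum_congr rfl fun j _ => by ring
          rw [hsum]
          show φ y i * (y ⬝ᵥ y) / d = φ y i
          rw [← hdd, mul_div_assoc, div_self hd, mul_one]
    -- closed-loop form
    have hcl : A *ᵥ z + B *ᵥ φ y = (A + B * Δ * C) *ᵥ z := by
      rw [Matrix.add_mulVec, ← Matrix.mulVec_mulVec, ← Matrix.mulVec_mulVec, ← hy, hΔy]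
    rw [hcl]
    have hps := (Matrix.posSemidef_iff_dotProduct_mulVec.mp (hLMI Δ hΔbound)).2 z
    rw [star_trivial] at hps
    have hexpand : z ⬝ᵥ ((lam ^ 2 • P - (A + B * Δ * C)ᵀ * P * (A + B * Δ * C)) *ᵥ z)
        = lam ^ 2 * (z ⬝ᵥ (P *ᵥ z))
          - ((A + B * Δ * C) *ᵥ z) ⬝ᵥ (P *ᵥ ((A + B * Δ * C) *ᵥ z)) := by
      rw [Matrix.sub_mulVec, dotProduct_sub, Matrix.smul_mulVec, dotProduct_smul,
        smul_eq_mul]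
      congr 1
      rw [← Matrix.mulVec_mulVec, ← Matrix.mulVec_mulVec, Matrix.dotProduct_mulVec,
        Matrix.vecMul_transpose]
    rw [hexpand] at hps
    linarith
  intro k
  induction k with
  | zero => simp
  | succ k ih =>
    have hq : x (k + 1) ⬝ᵥ (P *ᵥ x (k + 1)) ≤ lam ^ 2 * (x k ⬝ᵥ (P *ᵥ x k)) := by
      rw [hx k]; exact key (x k)
    have hsq : Real.sqrt (x (k + 1) ⬝ᵥ (P *ᵥ x (k + 1)))
        ≤ lam * Real.sqrt (x k ⬝ᵥ (P *ᵥ x k)) := by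
      have := Real.sqrt_le_sqrt hq
      rwa [Real.sqrt_mul (sq_nonneg lam), Real.sqrt_sq hlam0.le] at this
    calc Real.sqrt (x (k + 1) ⬝ᵥ (P *ᵥ x (k + 1)))
        ≤ lam * Real.sqrt (x k ⬝ᵥ (P *ᵥ x k)) := hsq
      _ ≤ lam * (lam ^ k * Real.sqrt (x 0 ⬝ᵥ (P *ᵥ x 0))) := by
          exact mul_le_mul_of_nonneg_left ih hlam0.le
      _ = lam ^ (k + 1) * Real.sqrt (x 0 ⬝ᵥ (P *ᵥ x 0)) := by ring
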